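/- arXiv:2604.26304 — 2 statements merged into one kernel-verified Lean document; each statement's English description precedes it below -/
import Mathlib

section
/- For every integer m ≥ 2 and every natural number k, the PF-CME density assigns geometric mass to the k-th cell: ∫_{k·h_m}^{(k+1)·h_m} f_m(t) dt = (1 − q_m)·q_m^k, where q_m = e^{−h_m}. -/
open Real MeasureTheory

/-- The Fejér kernel of order `m`. -/
noncomputable def Fejer (m : ℕ) (θ : ℝ) : ℝ :=
  1 + 2 * ∑ ℓ ∈ Finset.Icc 1 (m - 1), (1 - (ℓ : ℝ) / m) * Real.cos ((ℓ : ℝ) * θ)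

/-- `r_m = ⌈log m⌉`. -/
noncomputable def rP (m : ℕ) : ℕ := ⌈Real.log m⌉₊

/-- `h_m = 2 log m + log log m`. -/
noncomputable def hP (m : ℕ) : ℝ := 2 * Real.log m + Real.log (Real.log m)

/-- `ω_m = 2π / h_m`. -/
noncomputable def ωP (m : ℕ) : ℝ := 2 * Real.pi / hP m

/-- `W_m = Φ_m ^ {r_m}`, the powered Fejér kernel. -/
noncomputable def WP (m : ℕ) (θ : ℝ) : ℝ := (Fejer m θ) ^ (rP m)

/-- The normalizing constant `C_m` making `∫_0^∞ f_m = 1`. -/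
noncomputable def CP (m : ℕ) : ℝ :=
  (∫ t in Set.Ioi (0 : ℝ), Real.exp (-t) * WP m (ωP m * (t - 1)))⁻¹

/-- The PF-CME density `f_m(t) = C_m e^{-t} W_m(ω_m (t-1))`. -/
noncomputable def fP (m : ℕ) (t : ℝ) : ℝ := CP m * Real.exp (-t) * WP m (ωP m * (t - 1))

/-- Fourier coefficients of the Fejér kernel: `γ_k = max(1 - |k|/m, 0)`. -/
noncomputable def fejerCoeff (m : ℕ) (k : ℤ) : ℝ := max (1 - |(k : ℝ)| / m) 0

/-- Discrete convolution of two (absolutely summable) sequences on `ℤ`. -/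
noncomputable def conv (f g : ℤ → ℝ) (k : ℤ) : ℝ := ∑' j : ℤ, f j * g (k - j)

/-- `r`-fold discrete convolution of a sequence on `ℤ`
(with the convention that the `0`-fold convolution is the unit `δ_0`). -/
noncomputable def convPow (f : ℤ → ℝ) : ℕ → ℤ → ℝ
  | 0 => fun k => if k = 0 then 1 else 0
  | n + 1 => conv f (convPow f n)

/-- `B_{ℓ,m}`: the `ℓ`-th coefficient of the `r_m`-fold discrete convolution of `γ`. -/
noncomputable def BP (m : ℕ) (ℓ : ℤ) : ℝ := convPow (fejerCoeff m) (rP m) ℓ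

/-- `L_m = r_m (m - 1)`. -/
noncomputable def LP (m : ℕ) : ℕ := rP m * (m - 1)

lemma hP_pos {m : ℕ} (hm : 2 ≤ m) : 0 < hP m := by
  have h2 : (2:ℝ) ≤ m := by exact_mod_cast hm
  have hl2 : (1:ℝ)/2 < Real.log 2 := by
    have := Real.log_two_gt_d9; linarith
  have hlm : Real.log 2 ≤ Real.log m := Real.log_le_log (by norm_num) h2
  have hllm : Real.log (1/2) ≤ Real.log (Real.log m) :=
    Real.log_le_log (by norm_num) (by linarith)
  have : Real.log (1/2) = - Real.log 2 := by
    rw [one_div, Real.log_inv]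
  unfold hP
  nlinarith [hlm, hllm, this]


lemma double_sum (m : ℕ) (θ : ℝ) :
    ∑ j ∈ Finset.range m, ∑ k ∈ Finset.range m, Real.cos (((j:ℝ) - k) * θ) =
      m + 2 * ∑ ℓ ∈ Finset.Icc 1 (m - 1), ((m:ℝ) - ℓ) * Real.cos ((ℓ:ℝ) * θ) := by
  induction m with
  | zero => simp
  | succ n ih =>
    have hS : ∑ k ∈ Finset.range n, Real.cos (((n:ℝ) - k) * θ)
        = ∑ ℓ ∈ Finset.Icc 1 n, Real.cos ((ℓ:ℝ) * θ) := by
      apply Finset.sum_nbij' (i := fun k => n - k) (j := fun ℓ => n - ℓ)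
      · intro k hk; simp only [Finset.mem_range] at hk; simp only [Finset.mem_Icc]; omega
      · intro ℓ hℓ; simp only [Finset.mem_Icc] at hℓ; simp only [Finset.mem_range]; omega
      · intro k hk; simp only [Finset.mem_range] at hk; omega
      · intro ℓ hℓ; simp only [Finset.mem_Icc] at hℓ; omega
      · intro k hk
        simp only [Finset.mem_range] at hk
        congr 1
        push_cast [Nat.cast_sub hk.le]
        ring
    have hS' : ∑ j ∈ Finset.range n, Real.cos (((j:ℝ) - n) * θ)
        = ∑ ℓ ∈ Finset.Icc 1 n, Real.cos ((ℓ:ℝ) * θ) := by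
      rw [← hS]
      apply Finset.sum_congr rfl
      intro j _
      rw [show ((j:ℝ) - n) * θ = -(((n:ℝ) - j) * θ) by ring, Real.cos_neg]
    rw [Finset.sum_range_succ]
    simp_rw [Finset.sum_range_succ]
    rw [Finset.sum_add_distrib, ih, hS, hS']
    rcases Nat.eq_zero_or_pos n with hn | hn
    · subst hn; simp
    · obtain ⟨p, rfl⟩ := Nat.exists_eq_add_of_le hn
      simp only [Nat.add_sub_cancel_left] at *
      -- now n = 1 + p
      have hsplit : ∀ c : ℝ, ∑ ℓ ∈ Finset.Icc 1 (1 + p), (c - ℓ) * Real.cos ((ℓ:ℝ) * θ)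
          = ∑ ℓ ∈ Finset.Icc 1 p, (c - ℓ) * Real.cos ((ℓ:ℝ) * θ)
            + (c - (1+p:ℕ)) * Real.cos (((1+p:ℕ):ℝ) * θ) := by
        intro c
        rw [show 1 + p = p + 1 by omega, Finset.sum_Icc_succ_top (by omega)]
      have hsplit2 : ∑ ℓ ∈ Finset.Icc 1 (1 + p), Real.cos ((ℓ:ℝ) * θ)
          = ∑ ℓ ∈ Finset.Icc 1 p, Real.cos ((ℓ:ℝ) * θ) + Real.cos (((1+p:ℕ):ℝ) * θ) := by
        rw [show 1 + p = p + 1 by omega, Finset.sum_Icc_succ_top (by omega)]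
      have h1p : ((1 + p + 1 : ℕ) : ℝ) - 1 = ((1 + p : ℕ) : ℝ) := by push_cast; ring
      rw [show (1 + p + 1) - 1 = 1 + p by omega]
      rw [hsplit ((1+p+1 : ℕ):ℝ), hsplit2]
      have hc : ∀ ℓ : ℕ, (((1+p+1:ℕ):ℝ) - ℓ) * Real.cos ((ℓ:ℝ)*θ)
          = (((1+p:ℕ):ℝ) - ℓ) * Real.cos ((ℓ:ℝ)*θ) + Real.cos ((ℓ:ℝ)*θ) := by
        intro ℓ; push_cast; ring
      have e1 : ∑ ℓ ∈ Finset.Icc 1 p, (((1+p+1:ℕ):ℝ) - ℓ) * Real.cos ((ℓ:ℝ)*θ)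
          = ∑ ℓ ∈ Finset.Icc 1 p, (((1+p:ℕ):ℝ) - ℓ) * Real.cos ((ℓ:ℝ)*θ)
            + ∑ ℓ ∈ Finset.Icc 1 p, Real.cos ((ℓ:ℝ)*θ) := by
        rw [← Finset.sum_add_distrib]; exact Finset.sum_congr rfl (fun ℓ _ => hc ℓ)
      rw [e1]
      push_cast
      simp only [sub_self, zero_mul, Real.cos_zero]
      ring

lemma sum_sq (m : ℕ) (θ : ℝ) :
    (∑ j ∈ Finset.range m, Real.cos ((j:ℝ) * θ))^2
      + (∑ j ∈ Finset.range m, Real.sin ((j:ℝ) * θ))^2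
    = ∑ j ∈ Finset.range m, ∑ k ∈ Finset.range m, Real.cos (((j:ℝ) - k) * θ) := by
  rw [sq, Finset.sum_mul_sum, sq, Finset.sum_mul_sum, ← Finset.sum_add_distrib]
  apply Finset.sum_congr rfl
  intro j _
  rw [← Finset.sum_add_distrib]
  apply Finset.sum_congr rfl
  intro k _
  rw [show ((j:ℝ) - k) * θ = (j:ℝ)*θ - (k:ℝ)*θ by ring, Real.cos_sub]

lemma fejer_nonneg {m : ℕ} (hm : 2 ≤ m) (θ : ℝ) : 0 ≤ Fejer m θ := by
  have hm0 : (0:ℝ) < m := by positivity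
  have key : (m:ℝ) * Fejer m θ =
      (∑ j ∈ Finset.range m, Real.cos ((j:ℝ) * θ))^2
      + (∑ j ∈ Finset.range m, Real.sin ((j:ℝ) * θ))^2 := by
    rw [sum_sq, double_sum]
    unfold Fejer
    rw [mul_add, mul_one, mul_left_comm, Finset.mul_sum]
    congr 1
    congr 1
    apply Finset.sum_congr rfl
    intro ℓ _
    field_simp
  have h1 : 0 ≤ (m:ℝ) * Fejer m θ := key ▸ by positivity
  exact nonneg_of_mul_nonneg_right h1 hm0

noncomputable def gP (m : ℕ) (t : ℝ) : ℝ := Real.exp (-t) * WP m (ωP m * (t - 1))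

lemma fejer_cont (m : ℕ) : Continuous (Fejer m) := by
  unfold Fejer
  refine continuous_const.add (continuous_const.mul ?_)
  exact continuous_finset_sum _ fun ℓ _ =>
    continuous_const.mul (Real.continuous_cos.comp (continuous_const.mul continuous_id))

lemma gP_cont (m : ℕ) : Continuous (gP m) := by
  unfold gP WP
  refine ((continuous_neg.rexp)).mul ?_
  exact (((fejer_cont m).comp (continuous_const.mul (continuous_id.sub continuous_const))).pow _)

lemma fejer_periodic (m : ℕ) (θ : ℝ) : Fejer m (θ + 2 * Real.pi) = Fejer m θ := by
  unfold Fejer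
  congr 1
  congr 1
  apply Finset.sum_congr rfl
  intro ℓ _
  congr 1
  rw [mul_add, mul_comm ((ℓ:ℝ)) (2*Real.pi), show (ℓ:ℝ) * θ + 2*Real.pi*ℓ = (ℓ:ℝ)*θ + ℓ*(2*Real.pi) by ring]
  exact Real.cos_add_nat_mul_two_pi _ ℓ

lemma gP_shift {m : ℕ} (hm : 2 ≤ m) (t : ℝ) :
    gP m (t + hP m) = Real.exp (-hP m) * gP m t := by
  have h0 := hP_pos hm
  have hω : ωP m * (t + hP m - 1) = ωP m * (t - 1) + 2 * Real.pi := by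
    unfold ωP; field_simp; ring
  unfold gP WP
  rw [hω, fejer_periodic, show -(t + hP m) = -hP m + -t by ring, Real.exp_add]
  ring

lemma fejer_bound {m : ℕ} (hm : 2 ≤ m) (θ : ℝ) : |Fejer m θ| ≤ 2 * m := by
  have h1 : |Fejer m θ| ≤ 1 + 2 * ∑ ℓ ∈ Finset.Icc 1 (m-1),
      |(1 - (ℓ : ℝ) / m) * Real.cos ((ℓ : ℝ) * θ)| := by
    unfold Fejer
    calc |1 + 2 * ∑ ℓ ∈ Finset.Icc 1 (m - 1), (1 - (ℓ : ℝ) / m) * Real.cos ((ℓ : ℝ) * θ)|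
        ≤ |1| + |2 * ∑ ℓ ∈ Finset.Icc 1 (m - 1), (1 - (ℓ : ℝ) / m) * Real.cos ((ℓ : ℝ) * θ)| :=
          abs_add_le _ _
      _ ≤ 1 + 2 * ∑ ℓ ∈ Finset.Icc 1 (m-1), |(1 - (ℓ : ℝ) / m) * Real.cos ((ℓ : ℝ) * θ)| := by
          rw [abs_one, abs_mul, abs_two]
          gcongr
          exact Finset.abs_sum_le_sum_abs _ _
  have h2 : ∀ ℓ ∈ Finset.Icc 1 (m-1), |(1 - (ℓ : ℝ) / m) * Real.cos ((ℓ : ℝ) * θ)| ≤ 1 := by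
    intro ℓ hℓ
    simp only [Finset.mem_Icc] at hℓ
    have hm0 : (0:ℝ) < m := by positivity
    have hle : (ℓ:ℝ) ≤ m := by
      have : ℓ ≤ m := by omega
      exact_mod_cast this
    have h01 : 0 ≤ (ℓ:ℝ)/m := by positivity
    have h02 : (ℓ:ℝ)/m ≤ 1 := by rw [div_le_one hm0]; exact hle
    rw [abs_mul]
    have : |1 - (ℓ:ℝ)/m| ≤ 1 := by rw [abs_le]; constructor <;> linarith
    calc |1 - (ℓ:ℝ)/m| * |Real.cos ((ℓ:ℝ)*θ)| ≤ 1 * 1 := by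
          apply mul_le_mul this (Real.abs_cos_le_one _) (abs_nonneg _) one_pos.le
      _ = 1 := by ring
  have h3 : ∑ ℓ ∈ Finset.Icc 1 (m-1), |(1 - (ℓ : ℝ) / m) * Real.cos ((ℓ : ℝ) * θ)|
      ≤ (m - 1 : ℕ) := by
    calc _ ≤ ∑ _ℓ ∈ Finset.Icc 1 (m-1), (1:ℝ) := Finset.sum_le_sum h2
      _ = (m-1 : ℕ) := by simp [Nat.card_Icc]
  have hcast : ((m-1:ℕ):ℝ) ≤ (m:ℝ) - 1 := by
    rw [Nat.cast_sub (by omega)]; norm_num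
  have hm1 : (1:ℝ) ≤ m := by exact_mod_cast Nat.one_le_of_lt hm
  linarith

lemma gP_bound {m : ℕ} (hm : 2 ≤ m) (t : ℝ) :
    ‖gP m t‖ ≤ (2*m)^(rP m) * Real.exp (-t) := by
  unfold gP WP
  rw [norm_mul, norm_pow]
  have h1 : ‖Real.exp (-t)‖ = Real.exp (-t) := by simp [Real.norm_eq_abs, abs_of_pos (Real.exp_pos _)]
  rw [h1, mul_comm]
  have hb : ‖Fejer m (ωP m * (t - 1))‖ ^ rP m ≤ (2*(m:ℝ)) ^ rP m :=
    pow_le_pow_left₀ (norm_nonneg _) (fejer_bound hm _) _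
  exact mul_le_mul_of_nonneg_right hb (Real.exp_pos _).le

lemma gP_int {m : ℕ} (hm : 2 ≤ m) (a : ℝ) : IntegrableOn (gP m) (Set.Ioi a) := by
  have hbig : IntegrableOn (fun t => (2*(m:ℝ))^(rP m) * Real.exp (-t)) (Set.Ioi a) := by
    have := (exp_neg_integrableOn_Ioi a (b := 1) one_pos)
    simp only [neg_mul, one_mul] at this
    exact this.const_mul _
  apply hbig.integrable.mono ((gP_cont m).aestronglyMeasurable.restrict)
  filter_upwards with t
  have := gP_bound hm t
  calc ‖gP m t‖ ≤ (2*m)^(rP m) * Real.exp (-t) := this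
    _ ≤ ‖(2*(m:ℝ))^(rP m) * Real.exp (-t)‖ := le_abs_self _

lemma gP_nonneg {m : ℕ} (hm : 2 ≤ m) (t : ℝ) : 0 ≤ gP m t := by
  unfold gP WP
  exact mul_nonneg (Real.exp_pos _).le (pow_nonneg (fejer_nonneg hm _) _)

lemma gP_one_pos {m : ℕ} (hm : 2 ≤ m) : 0 < gP m 1 := by
  unfold gP WP
  have : ωP m * (1 - 1) = 0 := by ring
  rw [this]
  have hF : 0 < Fejer m 0 := by
    unfold Fejer
    have : 0 ≤ ∑ ℓ ∈ Finset.Icc 1 (m-1), (1 - (ℓ : ℝ) / m) * Real.cos ((ℓ : ℝ) * 0) := by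
      apply Finset.sum_nonneg
      intro ℓ hℓ
      simp only [Finset.mem_Icc] at hℓ
      have hm0 : (0:ℝ) < m := by positivity
      have hle : (ℓ:ℝ) ≤ m := by exact_mod_cast (show ℓ ≤ m by omega)
      have : (ℓ:ℝ)/m ≤ 1 := by rw [div_le_one hm0]; exact hle
      simp only [mul_zero, Real.cos_zero, mul_one]
      linarith
    linarith
  exact mul_pos (Real.exp_pos _) (pow_pos hF _)

lemma I_pos {m : ℕ} (hm : 2 ≤ m) : 0 < ∫ t in Set.Ioi (0:ℝ), gP m t := by
  rw [setIntegral_pos_iff_support_of_nonneg_ae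
    (Filter.Eventually.of_forall fun t => gP_nonneg hm t) (gP_int hm 0)]
  have hU : IsOpen ({t | 0 < gP m t} ∩ Set.Ioi 0) :=
    (isOpen_lt continuous_const (gP_cont m)).inter isOpen_Ioi
  have h1 : (1:ℝ) ∈ {t | 0 < gP m t} ∩ Set.Ioi 0 :=
    ⟨gP_one_pos hm, by norm_num⟩
  have hpos := hU.measure_pos volume ⟨1, h1⟩
  refine lt_of_lt_of_le hpos (measure_mono ?_)
  rintro t ⟨ht1, ht2⟩
  exact ⟨ne_of_gt ht1, ht2⟩

lemma shift_Ioi {m : ℕ} (hm : 2 ≤ m) :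
    ∫ x in Set.Ioi (hP m), gP m x = ∫ x in Set.Ioi (0:ℝ), gP m (x + hP m) := by
  rw [← integral_indicator measurableSet_Ioi, ← integral_indicator measurableSet_Ioi]
  rw [← integral_add_right_eq_self ((Set.Ioi (hP m)).indicator (gP m)) (hP m)]
  congr 1
  ext x
  by_cases hx : 0 < x
  · rw [Set.indicator_of_mem (by simpa using hx), Set.indicator_of_mem (by simpa using hx)]
  · rw [Set.indicator_of_notMem (by simpa using hx), Set.indicator_of_notMem (by simpa using hx)]

lemma J_eq {m : ℕ} (hm : 2 ≤ m) :
    ∫ t in Set.Ioc (0:ℝ) (hP m), gP m t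
      = (1 - Real.exp (-hP m)) * ∫ t in Set.Ioi (0:ℝ), gP m t := by
  have h0 := hP_pos hm
  have hsplit : ∫ t in Set.Ioi (0:ℝ), gP m t
      = (∫ t in Set.Ioc (0:ℝ) (hP m), gP m t) + ∫ t in Set.Ioi (hP m), gP m t := by
    rw [← Set.Ioc_union_Ioi_eq_Ioi h0.le]
    exact setIntegral_union (Set.Ioc_disjoint_Ioi le_rfl) measurableSet_Ioi
      ((gP_int hm 0).mono_set Set.Ioc_subset_Ioi_self) (gP_int hm _)
  have htail : ∫ t in Set.Ioi (hP m), gP m t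
      = Real.exp (-hP m) * ∫ t in Set.Ioi (0:ℝ), gP m t := by
    rw [shift_Ioi hm]
    simp_rw [gP_shift hm]
    exact MeasureTheory.integral_const_mul _ _
  rw [htail] at hsplit
  linarith

lemma cell_eq {m : ℕ} (hm : 2 ≤ m) (k : ℕ) :
    ∫ t in ((k : ℝ) * hP m)..(((k : ℝ) + 1) * hP m), gP m t
      = (Real.exp (-hP m))^k * ∫ t in Set.Ioc (0:ℝ) (hP m), gP m t := by
  have h0 := hP_pos hm
  induction k with
  | zero =>
    simp only [Nat.cast_zero, zero_mul, zero_add, one_mul, pow_zero, one_mul]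
    rw [intervalIntegral.integral_of_le h0.le]
  | succ n ih =>
    have harith1 : ((n:ℝ)+1) * hP m = (n:ℝ) * hP m + hP m := by ring
    have harith2 : (((n:ℝ)+1)+1) * hP m = ((n:ℝ)+1) * hP m + hP m := by ring
    push_cast
    rw [harith2, harith1, ← intervalIntegral.integral_comp_add_right (fun t => gP m t) (hP m)]
    rw [← harith1]
    simp_rw [gP_shift hm]
    rw [intervalIntegral.integral_const_mul, ih, pow_succ]
    ring


theorem pfcme_geometric_cell_mass (m : ℕ) (hm : 2 ≤ m) (k : ℕ) :
    ∫ t in ((k : ℝ) * hP m)..(((k : ℝ) + 1) * hP m), fP m t =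
      (1 - Real.exp (-hP m)) * (Real.exp (-hP m)) ^ k := by
  have hI : CP m = (∫ t in Set.Ioi (0:ℝ), gP m t)⁻¹ := rfl
  have hfg : ∀ t, fP m t = CP m * gP m t := by
    intro t; unfold fP gP; ring
  simp_rw [hfg]
  rw [intervalIntegral.integral_const_mul, cell_eq hm k, J_eq hm, hI]
  have hIne : (∫ t in Set.Ioi (0:ℝ), gP m t) ≠ 0 := ne_of_gt (I_pos hm)
  field_simp
end

section
/- There exist constants 0 < a_1 < a_2 < ∞ and an integer m_0 such that for all m ≥ m_0 and all real x with |x| ≤ 5/m, the Fejér kernel satisfies m·e^{−a_2·m²·x²} ≤ Φ_m(x) ≤ m·e^{−a_1·m²·x²}. -/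
open Real

private lemma sum_Icc_id_real (n : ℕ) : ∑ ℓ ∈ Finset.Icc 1 n, (ℓ : ℝ) = n * (n + 1) / 2 := by
  induction n with
  | zero => simp
  | succ n ih =>
    rw [Finset.sum_Icc_succ_top (by omega), ih]
    push_cast
    ring

private lemma dirichlet_id (x : ℝ) (n : ℕ) :
    (1 - Real.cos x) * (1 + 2 * ∑ ℓ ∈ Finset.Icc 1 n, Real.cos ((ℓ : ℝ) * x))
      = Real.cos ((n : ℝ) * x) - Real.cos (((n : ℝ) + 1) * x) := by
  induction n with
  | zero => simp [mul_comm]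
  | succ n ih =>
    rw [Finset.sum_Icc_succ_top (by omega)]
    have key : Real.cos (((n : ℝ) + 1) * x + x) + Real.cos (((n : ℝ) + 1) * x - x)
        = 2 * Real.cos (((n : ℝ) + 1) * x) * Real.cos x := by
      rw [Real.cos_add, Real.cos_sub]; ring
    have e1 : ((n : ℝ) + 1) * x + x = (((n : ℕ) + 1 : ℝ) + 1) * x := by push_cast; ring
    have e2 : ((n : ℝ) + 1) * x - x = (n : ℝ) * x := by ring
    have e3 : (((n : ℕ) + 1 : ℕ) : ℝ) = (n : ℝ) + 1 := by push_cast; ring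
    rw [e3]
    rw [e1, e2] at key
    push_cast at key ⊢
    nlinarith [ih, key]

private lemma fejer_sum_id (x : ℝ) (n : ℕ) :
    (1 - Real.cos x) * (((n : ℝ) + 1) + 2 * ∑ ℓ ∈ Finset.Icc 1 n,
        (((n : ℝ) + 1) - ℓ) * Real.cos ((ℓ : ℝ) * x))
      = 1 - Real.cos (((n : ℝ) + 1) * x) := by
  induction n with
  | zero => simp
  | succ n ih =>
    have hd := dirichlet_id x (n + 1)
    have hterm : ∀ ℓ : ℕ, ((((n + 1 : ℕ) : ℝ) + 1) - ℓ) * Real.cos ((ℓ : ℝ) * x)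
        = (((n : ℝ) + 1) - ℓ) * Real.cos ((ℓ : ℝ) * x) + Real.cos ((ℓ : ℝ) * x) := by
      intro ℓ; push_cast; ring
    have hsplit : ∑ ℓ ∈ Finset.Icc 1 (n + 1), ((((n + 1 : ℕ) : ℝ) + 1) - ℓ) * Real.cos ((ℓ : ℝ) * x)
        = (∑ ℓ ∈ Finset.Icc 1 n, (((n : ℝ) + 1) - ℓ) * Real.cos ((ℓ : ℝ) * x))
          + ∑ ℓ ∈ Finset.Icc 1 (n + 1), Real.cos ((ℓ : ℝ) * x) := by
      rw [Finset.sum_congr rfl (fun ℓ _ => hterm ℓ), Finset.sum_add_distrib,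
        Finset.sum_Icc_succ_top (a := 1) (b := n)
          (f := fun ℓ : ℕ => (((n : ℝ) + 1) - ℓ) * Real.cos ((ℓ : ℝ) * x)) (by omega)]
      push_cast
      ring
    rw [hsplit]
    push_cast at hd ih ⊢
    nlinarith [hd, ih]

private lemma fejer_closed (m : ℕ) (hm : 1 ≤ m) (x : ℝ) :
    (1 - Real.cos x) * ((m : ℝ) * Fejer m x) = 1 - Real.cos ((m : ℝ) * x) := by
  obtain ⟨n, rfl⟩ : ∃ n, m = n + 1 := ⟨m - 1, by omega⟩
  have hmul : ((n + 1 : ℕ) : ℝ) * Fejer (n + 1) x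
      = ((n : ℝ) + 1) + 2 * ∑ ℓ ∈ Finset.Icc 1 n,
          (((n : ℝ) + 1) - ℓ) * Real.cos ((ℓ : ℝ) * x) := by
    unfold Fejer
    simp only [Nat.add_sub_cancel]
    have hne : ((n : ℝ) + 1) ≠ 0 := by positivity
    have hterm : ∀ ℓ : ℕ, ((n : ℝ) + 1) * ((1 - (ℓ : ℝ) / ((n + 1 : ℕ) : ℝ)) * Real.cos ((ℓ : ℝ) * x))
        = (((n : ℝ) + 1) - ℓ) * Real.cos ((ℓ : ℝ) * x) := by
      intro ℓ
      push_cast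
      field_simp
    push_cast
    rw [mul_add, mul_one, ← mul_assoc, mul_comm ((n : ℝ) + 1) 2, mul_assoc, Finset.mul_sum]
    push_cast at hterm
    rw [Finset.sum_congr rfl (fun ℓ _ => hterm ℓ)]
  rw [hmul]
  have := fejer_sum_id x n
  push_cast
  push_cast at this
  linarith [this]

private lemma fejer_formula (m : ℕ) (hm : 1 ≤ m) (x : ℝ) (hs : Real.sin (x / 2) ≠ 0) :
    Fejer m x = Real.sin ((m : ℝ) * x / 2) ^ 2 / ((m : ℝ) * Real.sin (x / 2) ^ 2) := by
  have h := fejer_closed m hm x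
  have h1 : 1 - Real.cos x = 2 * Real.sin (x / 2) ^ 2 := by
    rw [Real.sin_sq_eq_half_sub]
    rw [show 2 * (x / 2) = x by ring]
    ring
  have h2 : 1 - Real.cos ((m : ℝ) * x) = 2 * Real.sin ((m : ℝ) * x / 2) ^ 2 := by
    rw [Real.sin_sq_eq_half_sub]
    rw [show 2 * ((m : ℝ) * x / 2) = (m : ℝ) * x by ring]
    ring
  rw [h1, h2] at h
  have hm0 : (m : ℝ) ≠ 0 := by positivity
  have hs2 : Real.sin (x / 2) ^ 2 ≠ 0 := pow_ne_zero _ hs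
  field_simp
  linarith [h]

private lemma fejer_at_zero (m : ℕ) (hm : 1 ≤ m) : Fejer m 0 = m := by
  obtain ⟨n, rfl⟩ : ∃ n, m = n + 1 := ⟨m - 1, by omega⟩
  unfold Fejer
  simp only [Nat.add_sub_cancel, mul_zero, Real.cos_zero, mul_one]
  have hsum : ∑ ℓ ∈ Finset.Icc 1 n, ((1 : ℝ) - (ℓ : ℝ) / ((n + 1 : ℕ) : ℝ))
      = (n : ℝ) - ((n : ℝ) * ((n : ℝ) + 1) / 2) / ((n : ℝ) + 1) := by
    rw [Finset.sum_sub_distrib, Finset.sum_const, Nat.card_Icc, ← Finset.sum_div, sum_Icc_id_real]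
    push_cast
    simp
  rw [hsum]
  have hne : ((n : ℝ) + 1) ≠ 0 := by positivity
  push_cast
  field_simp
  ring

private lemma exp_neg_two_mul_le (v : ℝ) (h0 : 0 ≤ v) (h1 : v ≤ 1 / 2) :
    Real.exp (-(2 * v)) ≤ 1 - v := by
  have he : 1 + 2 * v ≤ Real.exp (2 * v) := by linarith [Real.add_one_le_exp (2 * v)]
  have hpos : (0 : ℝ) < 1 + 2 * v := by linarith
  rw [Real.exp_neg]
  rw [inv_le_comm₀ (Real.exp_pos _) (by nlinarith : (0:ℝ) < 1 - v)]
  calc (1 - v)⁻¹ ≤ 1 + 2 * v := by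
        rw [inv_le_iff_one_le_mul₀ (by nlinarith)]
        nlinarith
    _ ≤ Real.exp (2 * v) := he

/-- Lower bound: `t * exp (-(2 t^2)) ≤ sin t` on `(0, 5/2]`. -/
private lemma sin_lower (t : ℝ) (h0 : 0 < t) (h1 : t ≤ 5 / 2) :
    t * Real.exp (-(2 * t ^ 2)) ≤ Real.sin t := by
  rcases le_or_gt t 1 with h | h
  · have hs : t - t ^ 3 / 4 < Real.sin t := by
      have := Real.sin_gt_sub_cube h0; have : 0 < t ^ 3 := by positivity
      linarith
    have hv : Real.exp (-(2 * t ^ 2)) ≤ 1 - t ^ 2 / 4 := by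
      have he : 1 + 2 * t ^ 2 ≤ Real.exp (2 * t ^ 2) := by
        linarith [Real.add_one_le_exp (2 * t ^ 2)]
      have ht2 : t ^ 2 ≤ 1 := by nlinarith
      rw [Real.exp_neg, inv_le_comm₀ (Real.exp_pos _) (by nlinarith : (0:ℝ) < 1 - t ^ 2 / 4)]
      calc (1 - t ^ 2 / 4)⁻¹ ≤ 1 + 2 * t ^ 2 := by
            rw [inv_le_iff_one_le_mul₀ (by nlinarith)]
            nlinarith [sq_nonneg (t ^ 2), ht2]
        _ ≤ Real.exp (2 * t ^ 2) := he
    nlinarith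
  · -- 1 < t ≤ 5/2 : sin t ≥ 1/2 and t * exp(-2t²) ≤ (5/2) * exp(-2) < 1/2
    have hpi : (3.141592 : ℝ) < π := Real.pi_gt_d6
    have hsin : (1 : ℝ) / 2 ≤ Real.sin t := by
      rcases le_or_gt t (π / 2) with hc | hc
      · have h1' : Real.sin 1 ≤ Real.sin t := by
          apply Real.strictMonoOn_sin.monotoneOn ⟨by linarith, by linarith⟩
            ⟨by linarith, hc⟩ h.le
        have := Real.sin_gt_sub_cube (by norm_num : (0:ℝ) < 1)
        norm_num at this
        linarith
      · rw [← Real.sin_pi_sub]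
        have hmem : π - t ∈ Set.Icc (-(π/2)) (π/2) := ⟨by linarith, by linarith⟩
        have h64 : (0.64 : ℝ) ≤ π - t := by linarith
        have hmono : Real.sin 0.64 ≤ Real.sin (π - t) :=
          Real.strictMonoOn_sin.monotoneOn ⟨by linarith, by linarith⟩ hmem h64
        have := Real.sin_gt_sub_cube (by norm_num : (0:ℝ) < 0.64)
        norm_num at this
        linarith
    have he2 : (7 : ℝ) ≤ Real.exp 2 := by
      have h1 := Real.exp_one_gt_d9
      have : Real.exp 2 = Real.exp 1 * Real.exp 1 := by
        rw [← Real.exp_add]; norm_num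
      nlinarith
    have hexp : Real.exp (-(2 * t ^ 2)) ≤ Real.exp (-2) := by
      apply Real.exp_le_exp.2
      nlinarith
    have : Real.exp (-2) ≤ 1 / 7 := by
      rw [Real.exp_neg, inv_le_comm₀ (Real.exp_pos _) (by norm_num)]
      linarith [he2]
    calc t * Real.exp (-(2 * t ^ 2)) ≤ (5 / 2) * (1 / 7) := by
          apply mul_le_mul h1 (hexp.trans this) (Real.exp_pos _).le (by norm_num)
      _ ≤ 1 / 2 := by norm_num
      _ ≤ Real.sin t := hsin

/-- Upper bound: `sin t ≤ t * exp (-(t^2/500))` on `(0, 5/2]`. -/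
private lemma sin_upper (t : ℝ) (h0 : 0 < t) (h1 : t ≤ 5 / 2) :
    Real.sin t ≤ t * Real.exp (-(t ^ 2 / 500)) := by
  have hpi : (3.141592 : ℝ) < π := Real.pi_gt_d6
  -- sin t = 2 sin(t/2) cos(t/2) ≤ t cos(t/2)
  have hcosnn : 0 ≤ Real.cos (t / 2) :=
    Real.cos_nonneg_of_mem_Icc ⟨by linarith, by linarith⟩
  have hst : Real.sin t ≤ t * Real.cos (t / 2) := by
    have : Real.sin t = 2 * Real.sin (t / 2) * Real.cos (t / 2) := by
      rw [show t = 2 * (t / 2) by ring, Real.sin_two_mul]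
      ring_nf
    rw [this]
    have hs2 : Real.sin (t / 2) ≤ t / 2 := (Real.sin_lt (by linarith)).le
    nlinarith
  -- cos(t/2) ≤ 1 - t²/8 + t⁴/256
  have hcos : Real.cos (t / 2) ≤ 1 - t ^ 2 / 8 + t ^ 4 / 256 := by
    have hsq : Real.sin ((t / 2) / 2) ^ 2 = (1 - Real.cos (t / 2)) / 2 := by
      rw [Real.sin_sq_eq_half_sub, show 2 * (t / 2 / 2) = t / 2 by ring]
      ring
    have hq : t / 4 - (t / 4) ^ 3 / 4 < Real.sin (t / 4) := by
      have := Real.sin_gt_sub_cube (by linarith : (0:ℝ) < t / 4)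
      have : 0 < (t / 4) ^ 3 := by positivity
      linarith
    have hw : (t / 4) ^ 2 ≤ 1 := by nlinarith
    have hqpos : 0 < t / 4 - (t / 4) ^ 3 / 4 := by nlinarith [hw]
    have hsin2 : (t / 4 - (t / 4) ^ 3 / 4) ^ 2 ≤ Real.sin (t / 4) ^ 2 := by nlinarith
    have h4 : (t / 2) / 2 = t / 4 := by ring
    rw [h4] at hsq
    have hcosval : Real.cos (t / 2) = 1 - 2 * Real.sin (t / 4) ^ 2 := by linarith
    have h6 : 0 ≤ (t / 4) ^ 6 := by positivity
    have e1 : (t / 4 - (t / 4) ^ 3 / 4) ^ 2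
        = (t / 4) ^ 2 - (t / 4) ^ 4 / 2 + (t / 4) ^ 6 / 16 := by ring
    have e2 : 1 - 2 * ((t / 4) ^ 2 - (t / 4) ^ 4 / 2) = 1 - t ^ 2 / 8 + t ^ 4 / 256 := by ring
    rw [hcosval]
    linarith [hsin2, e1, e2, h6]
  have hexp : 1 - t ^ 2 / 500 ≤ Real.exp (-(t ^ 2 / 500)) := by
    linarith [Real.add_one_le_exp (-(t ^ 2 / 500))]
  have ht25 : t ^ 2 ≤ 25 / 4 := by nlinarith
  have : 1 - t ^ 2 / 8 + t ^ 4 / 256 ≤ 1 - t ^ 2 / 500 := by nlinarith [sq_nonneg t, ht25]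
  calc Real.sin t ≤ t * Real.cos (t / 2) := hst
    _ ≤ t * (1 - t ^ 2 / 500) := by nlinarith
    _ ≤ t * Real.exp (-(t ^ 2 / 500)) := by nlinarith [Real.exp_pos (-(t ^ 2 / 500))]

private lemma fejer_even (m : ℕ) (x : ℝ) : Fejer m (-x) = Fejer m x := by
  unfold Fejer
  congr 1
  congr 1
  apply Finset.sum_congr rfl
  intro ℓ _
  rw [mul_neg, Real.cos_neg]

set_option maxHeartbeats 1000000 in
/-- Main bounds for nonnegative x. -/
private lemma key_bounds (m : ℕ) (hm : 100 ≤ m) (x : ℝ) (hx0 : 0 ≤ x) (hx : x ≤ 5 / m) :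
    (m : ℝ) * Real.exp (-(1 * (m : ℝ) ^ 2 * x ^ 2)) ≤ Fejer m x ∧
      Fejer m x ≤ (m : ℝ) * Real.exp (-(1 / 2000 * (m : ℝ) ^ 2 * x ^ 2)) := by
  have hm1 : 1 ≤ m := by omega
  have hmR : (100 : ℝ) ≤ (m : ℝ) := by exact_mod_cast hm
  have hmpos : (0 : ℝ) < m := by linarith
  rcases eq_or_lt_of_le hx0 with hx0' | hx0'
  · -- x = 0
    rw [← hx0']
    rw [fejer_at_zero m hm1]
    norm_num
  · -- 0 < x
    have hpi : (3.141592 : ℝ) < π := Real.pi_gt_d6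
    set u : ℝ := x / 2 with hudef
    set t : ℝ := (m : ℝ) * x / 2 with htdef
    have hu0 : 0 < u := by rw [hudef]; linarith
    have hmx : (m : ℝ) * x ≤ 5 := by
      have h5 : (m : ℝ) * (5 / m) = 5 := by field_simp
      calc (m : ℝ) * x ≤ (m : ℝ) * (5 / m) := by
            exact mul_le_mul_of_nonneg_left hx hmpos.le
        _ = 5 := h5
    have ht0 : 0 < t := by
      have hmxpos : 0 < (m : ℝ) * x := by positivity
      rw [htdef]; linarith
    have ht1 : t ≤ 5 / 2 := by rw [htdef]; linarith
    have hu1 : u ≤ 1 / 40 := by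
      have hx5 : x ≤ 5 / 100 := by
        calc x ≤ 5 / m := hx
          _ ≤ 5 / 100 := div_le_div_of_nonneg_left (by norm_num) (by norm_num) hmR
      rw [hudef]; linarith
    have hsinu_pos : 0 < Real.sin u :=
      Real.sin_pos_of_pos_of_lt_pi hu0 (by linarith)
    have hsinu_lt : Real.sin u < u := Real.sin_lt hu0
    have hform : Fejer m x = Real.sin t ^ 2 / ((m : ℝ) * Real.sin u ^ 2) := by
      rw [hudef, htdef]
      exact fejer_formula m hm1 x (by rw [← hudef]; exact ne_of_gt hsinu_pos)
    have ht2 : t ^ 2 = (m : ℝ) ^ 2 * x ^ 2 / 4 := by rw [htdef]; ring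
    have htu : t = (m : ℝ) * u := by rw [htdef, hudef]; ring
    have hsinT_nonneg : 0 ≤ Real.sin t :=
      Real.sin_nonneg_of_nonneg_of_le_pi ht0.le (by linarith)
    have hL := sin_lower t ht0 ht1
    have hU := sin_upper t ht0 ht1
    -- abbreviations
    set A : ℝ := Real.exp (-(2 * t ^ 2)) with hAdef
    set B : ℝ := Real.exp (-(t ^ 2 / 500)) with hBdef
    set C : ℝ := Real.exp (-(t ^ 2 / 20000)) with hCdef
    have hApos : 0 < A := Real.exp_pos _
    have hBpos : 0 < B := Real.exp_pos _
    have hCpos : 0 < C := Real.exp_pos _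
    clear_value u t A B C
    have hden_pos : 0 < (m : ℝ) * Real.sin u ^ 2 := by positivity
    have htne : t ≠ 0 := ne_of_gt ht0
    have hmne : (m : ℝ) ≠ 0 := ne_of_gt hmpos
    constructor
    · -- lower bound
      have num_ge : (t * A) ^ 2 ≤ Real.sin t ^ 2 := by
        apply pow_le_pow_left₀ (by positivity) hL
      have den_le : (m : ℝ) * Real.sin u ^ 2 ≤ t ^ 2 / m := by
        have h1 : Real.sin u ^ 2 ≤ u ^ 2 := by nlinarith
        have h2 : (m : ℝ) * u ^ 2 = t ^ 2 / m := by
          rw [htu]; field_simp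
        nlinarith
      have hdiv : (t * A) ^ 2 / (t ^ 2 / m) ≤ Real.sin t ^ 2 / ((m : ℝ) * Real.sin u ^ 2) :=
        div_le_div₀ (by positivity) num_ge hden_pos den_le
      have heq : (t * A) ^ 2 / (t ^ 2 / m) = (m : ℝ) * A ^ 2 := by
        field_simp
      have hA2 : A ^ 2 = Real.exp (-(1 * (m : ℝ) ^ 2 * x ^ 2)) := by
        rw [hAdef, sq, ← Real.exp_add]
        congr 1
        rw [ht2]; ring
      rw [hform]
      calc (m : ℝ) * Real.exp (-(1 * (m : ℝ) ^ 2 * x ^ 2)) = (t * A) ^ 2 / (t ^ 2 / m) := by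
            rw [heq, hA2]
        _ ≤ _ := hdiv
    · -- upper bound
      have num_le : Real.sin t ^ 2 ≤ (t * B) ^ 2 := by
        apply pow_le_pow_left₀ hsinT_nonneg hU
      have ht25 : t ^ 2 ≤ 25 / 4 := by nlinarith [ht0, ht1]
      have hmsinu : t * C ≤ (m : ℝ) * Real.sin u := by
        have hcube : u - u ^ 3 / 4 < Real.sin u := by
          have := Real.sin_gt_sub_cube hu0; have : 0 < u ^ 3 := by positivity
          linarith
        have hu2 : u ^ 2 ≤ t ^ 2 / 10000 := by
          have h10 : (10000 : ℝ) ≤ (m : ℝ) ^ 2 := by nlinarith [hmR]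
          have ht2' : t ^ 2 = (m : ℝ) ^ 2 * u ^ 2 := by rw [htu]; ring
          nlinarith [sq_nonneg u, h10, ht2']
        have hCle : C ≤ 1 - t ^ 2 / 40000 := by
          have := exp_neg_two_mul_le (t ^ 2 / 40000) (by positivity) (by linarith [ht25])
          rw [hCdef]
          convert this using 2
          ring
        have hstep : t * (1 - t ^ 2 / 40000) ≤ (m : ℝ) * Real.sin u := by
          have hsu : u * (1 - u ^ 2 / 4) ≤ Real.sin u := by
            have hre : u * (1 - u ^ 2 / 4) = u - u ^ 3 / 4 := by ring
            linarith [hcube]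
          have h3 : (m : ℝ) * (u * (1 - u ^ 2 / 4)) = t * (1 - u ^ 2 / 4) := by
            rw [htu]; ring
          have h5 : t * (1 - t ^ 2 / 40000) ≤ t * (1 - u ^ 2 / 4) :=
            mul_le_mul_of_nonneg_left (by linarith [hu2]) ht0.le
          have h6 : (m : ℝ) * (u * (1 - u ^ 2 / 4)) ≤ (m : ℝ) * Real.sin u :=
            mul_le_mul_of_nonneg_left hsu hmpos.le
          linarith [h5, h6, h3.symm.le, h3.le]
        have h7 : t * C ≤ t * (1 - t ^ 2 / 40000) :=
          mul_le_mul_of_nonneg_left hCle ht0.le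
        linarith [h7, hstep]
      have den_ge : (t * C) ^ 2 / m ≤ (m : ℝ) * Real.sin u ^ 2 := by
        have hsq : (t * C) ^ 2 ≤ ((m : ℝ) * Real.sin u) ^ 2 :=
          pow_le_pow_left₀ (by positivity) hmsinu 2
        have e : ((m : ℝ) * Real.sin u) ^ 2 = ((m : ℝ) * Real.sin u ^ 2) * m := by ring
        rw [div_le_iff₀ hmpos]
        linarith [hsq, e.le, e.ge]
      have hdiv : Real.sin t ^ 2 / ((m : ℝ) * Real.sin u ^ 2) ≤ (t * B) ^ 2 / ((t * C) ^ 2 / m) :=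
        div_le_div₀ (by positivity) num_le (by positivity) den_ge
      have heq : (t * B) ^ 2 / ((t * C) ^ 2 / m) = (m : ℝ) * (B ^ 2 / C ^ 2) := by
        field_simp
      have hB2 : B ^ 2 = Real.exp (-(t ^ 2 / 250)) := by
        rw [hBdef, sq, ← Real.exp_add]; congr 1; ring
      have hC2 : C ^ 2 = Real.exp (-(t ^ 2 / 10000)) := by
        rw [hCdef, sq, ← Real.exp_add]; congr 1; ring
      have hBC : B ^ 2 / C ^ 2 = Real.exp (-(t ^ 2 / 250) - -(t ^ 2 / 10000)) := by
        rw [hB2, hC2, Real.exp_sub]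
      have hfin : (m : ℝ) * (B ^ 2 / C ^ 2) ≤ (m : ℝ) * Real.exp (-(1 / 2000 * (m : ℝ) ^ 2 * x ^ 2)) := by
        rw [hBC]
        apply mul_le_mul_of_nonneg_left _ hmpos.le
        apply Real.exp_le_exp.2
        have h4 : (1:ℝ) / 2000 * (m : ℝ) ^ 2 * x ^ 2 = t ^ 2 / 500 := by
          rw [ht2]; ring
        rw [h4]
        linarith [sq_nonneg t]
      rw [hform]
      calc Real.sin t ^ 2 / ((m : ℝ) * Real.sin u ^ 2) ≤ (t * B) ^ 2 / ((t * C) ^ 2 / m) := hdiv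
        _ = (m : ℝ) * (B ^ 2 / C ^ 2) := heq
        _ ≤ _ := hfin

theorem fejer_peak_gaussian_bounds :
    ∃ a₁ a₂ : ℝ, 0 < a₁ ∧ a₁ < a₂ ∧
      ∃ m₀ : ℕ, ∀ m : ℕ, m₀ ≤ m → ∀ x : ℝ, |x| ≤ 5 / m →
        (m : ℝ) * Real.exp (-(a₂ * m ^ 2 * x ^ 2)) ≤ Fejer m x ∧
        Fejer m x ≤ (m : ℝ) * Real.exp (-(a₁ * m ^ 2 * x ^ 2)) := by
  refine ⟨1 / 2000, 1, by norm_num, by norm_num, 100, ?_⟩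
  intro m hm x hx
  have h := key_bounds m hm |x| (abs_nonneg x) hx
  rw [sq_abs] at h
  have hfe : Fejer m |x| = Fejer m x := by
    rcases abs_cases x with ⟨h1, _⟩ | ⟨h1, _⟩
    · rw [h1]
    · rw [h1, fejer_even]
  rw [hfe] at h
  exact h
end
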